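/- Let u be four times continuously differentiable on an interval containing the range of a twice continuously differentiable mapping x : [0, 1] → ℝ, and assume u'''(x(q)) > 0 for all q ∈ [0, 1]. Then for every q ∈ [0, 1], d/dq[ (u'''(x(q)))^{1/4} · x'(q) ] = (u'''(x(q)))^{−3/4} · ( x''(q)·u'''(x(q)) + (1/4)·(x'(q))²·u''''(x(q)) ). Consequently, the fourth-order condition x''(q)·u'''(x(q)) + (1/4)·(x'(q))²·u''''(x(q)) = 0 on [0, 1] holds if and only if (u'''(x(q)))^{1/4}·x'(q) is constant on [0, 1], i.e. if and only if x equidistributes the monitor function ω(y) = (u'''(y))^{1/4}. -/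

import Mathlib

/-- for u four times continuously differentiable on an interval [a,b]
containing the range of a C² mapping x : [0,1] → ℝ, with u'''(x(q)) > 0 on [0,1],
d/dq[(u'''(x(q)))^{1/4}·x'(q)] = (u'''(x(q)))^{−3/4}·(x''(q)·u'''(x(q)) + (1/4)·(x'(q))²·u''''(x(q))),
and the fourth-order condition holds on [0,1] iff (u'''(x(q)))^{1/4}·x'(q) is constant,
i.e. iff x equidistributes the monitor ω = (u''')^{1/4}. -/
theorem stmt_15 (a b : ℝ) (hab : a < b) (u x : ℝ → ℝ)
    (hu : ContDiffOn ℝ 4 u (Set.Icc a b))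
    (hx : ContDiffOn ℝ 2 x (Set.Icc 0 1))
    (hmap : Set.MapsTo x (Set.Icc 0 1) (Set.Icc a b))
    (hpos : ∀ q ∈ Set.Icc (0 : ℝ) 1, 0 < iteratedDerivWithin 3 u (Set.Icc a b) (x q)) :
    (∀ q ∈ Set.Icc (0 : ℝ) 1,
      derivWithin
          (fun s => iteratedDerivWithin 3 u (Set.Icc a b) (x s) ^ ((1 : ℝ) / 4)
            * derivWithin x (Set.Icc 0 1) s) (Set.Icc 0 1) q
        = iteratedDerivWithin 3 u (Set.Icc a b) (x q) ^ (-(3 : ℝ) / 4)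
            * (iteratedDerivWithin 2 x (Set.Icc 0 1) q
                  * iteratedDerivWithin 3 u (Set.Icc a b) (x q)
                + 1 / 4 * (derivWithin x (Set.Icc 0 1) q) ^ 2
                  * iteratedDerivWithin 4 u (Set.Icc a b) (x q))) ∧
    ((∀ q ∈ Set.Icc (0 : ℝ) 1,
        iteratedDerivWithin 2 x (Set.Icc 0 1) q * iteratedDerivWithin 3 u (Set.Icc a b) (x q)
          + 1 / 4 * (derivWithin x (Set.Icc 0 1) q) ^ 2
              * iteratedDerivWithin 4 u (Set.Icc a b) (x q) = 0)
      ↔ ∃ c : ℝ, ∀ q ∈ Set.Icc (0 : ℝ) 1,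
          iteratedDerivWithin 3 u (Set.Icc a b) (x q) ^ ((1 : ℝ) / 4)
            * derivWithin x (Set.Icc 0 1) q = c) := by
  have hI : UniqueDiffOn ℝ (Set.Icc (0:ℝ) 1) := uniqueDiffOn_Icc one_pos
  have hJ : UniqueDiffOn ℝ (Set.Icc a b) := uniqueDiffOn_Icc hab
  set U3 := iteratedDerivWithin 3 u (Set.Icc a b) with hU3def
  set U4 := iteratedDerivWithin 4 u (Set.Icc a b) with hU4def
  set x' := derivWithin x (Set.Icc (0:ℝ) 1) with hx'def
  set x'' := iteratedDerivWithin 2 x (Set.Icc (0:ℝ) 1) with hx''def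
  set g : ℝ → ℝ := fun s => U3 (x s) ^ ((1:ℝ)/4) * x' s with hgdef
  -- differentiability facts
  have hU3diff : DifferentiableOn ℝ U3 (Set.Icc a b) :=
    hu.differentiableOn_iteratedDerivWithin (by norm_num) hJ
  have hxdiff : DifferentiableOn ℝ x (Set.Icc 0 1) :=
    hx.differentiableOn (by norm_num)
  have hx'diff : DifferentiableOn ℝ x' (Set.Icc 0 1) := by
    have := hx.differentiableOn_iteratedDerivWithin (m := 1) (by norm_num) hI
    refine this.congr fun q hq => ?_
    rw [iteratedDerivWithin_one]
  -- key derivative claim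
  have key : ∀ q ∈ Set.Icc (0:ℝ) 1,
      HasDerivWithinAt g
        (U3 (x q) ^ (-(3:ℝ)/4)
          * (x'' q * U3 (x q) + 1/4 * (x' q) ^ 2 * U4 (x q))) (Set.Icc 0 1) q := by
    intro q hq
    have hxq : x q ∈ Set.Icc a b := hmap hq
    have hx1 : HasDerivWithinAt x (x' q) (Set.Icc 0 1) q :=
      (hxdiff q hq).hasDerivWithinAt
    have hU3d : HasDerivWithinAt U3 (U4 (x q)) (Set.Icc a b) (x q) := by
      have := (hU3diff (x q) hxq).hasDerivWithinAt
      rwa [show U4 (x q) = derivWithin U3 (Set.Icc a b) (x q) from ?_]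
      rw [hU4def, hU3def, ← iteratedDerivWithin_succ]
    have hcomp : HasDerivWithinAt (fun s => U3 (x s)) (U4 (x q) * x' q) (Set.Icc 0 1) q :=
      hU3d.comp q hx1 hmap
    have hvpos : 0 < U3 (x q) := hpos q hq
    have hrpow : HasDerivAt (fun y : ℝ => y ^ ((1:ℝ)/4))
        ((1:ℝ)/4 * U3 (x q) ^ ((1:ℝ)/4 - 1)) (U3 (x q)) :=
      Real.hasDerivAt_rpow_const (Or.inl (ne_of_gt hvpos))
    have hpow : HasDerivWithinAt (fun s => U3 (x s) ^ ((1:ℝ)/4))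
        ((1:ℝ)/4 * U3 (x q) ^ ((1:ℝ)/4 - 1) * (U4 (x q) * x' q)) (Set.Icc 0 1) q :=
      hrpow.comp_hasDerivWithinAt (h₂ := fun y : ℝ => y ^ ((1:ℝ)/4)) q hcomp
    have hx''eq : x'' q = derivWithin x' (Set.Icc 0 1) q := by
      rw [hx''def, show (2:ℕ) = 1 + 1 from rfl, iteratedDerivWithin_succ]
      exact derivWithin_congr (fun y hy => congrFun iteratedDerivWithin_one y)
        (congrFun iteratedDerivWithin_one q)
    have hx'1 : HasDerivWithinAt x' (x'' q) (Set.Icc 0 1) q := by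
      rw [hx''eq]; exact (hx'diff q hq).hasDerivWithinAt
    have h := hpow.mul hx'1
    refine h.congr_deriv ?_
    have hne : U3 (x q) ≠ 0 := ne_of_gt hvpos
    have e1 : U3 (x q) ^ ((1:ℝ)/4 - 1) = U3 (x q) ^ (-(3:ℝ)/4) := by norm_num
    have e2 : U3 (x q) ^ ((1:ℝ)/4) = U3 (x q) ^ (-(3:ℝ)/4) * U3 (x q) := by
      rw [show ((1:ℝ)/4) = -(3:ℝ)/4 + 1 by norm_num, Real.rpow_add hvpos, Real.rpow_one]
    rw [e1, e2]
    ring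
  have deriv_eq : ∀ q ∈ Set.Icc (0:ℝ) 1,
      derivWithin g (Set.Icc 0 1) q
        = U3 (x q) ^ (-(3:ℝ)/4) * (x'' q * U3 (x q) + 1/4 * (x' q) ^ 2 * U4 (x q)) :=
    fun q hq => (key q hq).derivWithin (hI q hq)
  refine ⟨deriv_eq, ?_, ?_⟩
  · -- condition ⇒ constant
    intro hcond
    refine ⟨g 0, fun q hq => ?_⟩
    have hgdiff : DifferentiableOn ℝ g (Set.Icc 0 1) :=
      fun s hs => ((key s hs).differentiableWithinAt)
    have hzero : ∀ s ∈ Set.Ico (0:ℝ) 1, derivWithin g (Set.Icc 0 1) s = 0 := by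
      intro s hs
      have hs' : s ∈ Set.Icc (0:ℝ) 1 := Set.Ico_subset_Icc_self hs
      rw [deriv_eq s hs', hcond s hs', mul_zero]
    exact constant_of_derivWithin_zero hgdiff hzero q hq
  · -- constant ⇒ condition
    rintro ⟨c, hc⟩ q hq
    have hvpos : 0 < U3 (x q) := hpos q hq
    have hzero : derivWithin g (Set.Icc 0 1) q = 0 := by
      have h1 : derivWithin g (Set.Icc 0 1) q = derivWithin (fun _ => c) (Set.Icc 0 1) q :=
        derivWithin_congr hc (hc q hq)
      rw [h1, (hasDerivWithinAt_const q _ c).derivWithin (hI q hq)]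
    have := deriv_eq q hq
    rw [hzero] at this
    have hne : U3 (x q) ^ (-(3:ℝ)/4) ≠ 0 :=
      ne_of_gt (Real.rpow_pos_of_pos hvpos _)
    exact (mul_eq_zero.mp this.symm).resolve_left hne
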